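/- Every self-dual additive code C ⊆ GF(4)^n (with respect to the Hermitian trace inner product) is equivalent to a graph code: there exist a simple undirected graph G on vertices {1,…,n} and a code equivalence map f of GF(4)^n with f(C) = 𝒞(G). -/

import Mathlib

open Finset
open scoped Classical

noncomputable section

/-- The Hermitian trace inner product on `GF(4)^n`. -/
def trinner {n : ℕ} (u v : Fin n → GaloisField 2 2) : GaloisField 2 2 :=
  ∑ i, (u i * v i ^ 2 + u i ^ 2 * v i)

/-- The dual of a set of vectors with respect to the Hermitian trace inner product. -/
def trdual {n : ℕ} (C : Set (Fin n → GaloisField 2 2)) : Set (Fin n → GaloisField 2 2) :=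
  {v | ∀ u ∈ C, trinner u v = 0}

/-- Row `i` of the matrix `Γ + ωI` associated to a graph `G`. -/
def graphRow {n : ℕ} (ω : GaloisField 2 2) (G : SimpleGraph (Fin n)) (i : Fin n) :
    Fin n → GaloisField 2 2 :=
  fun j => if i = j then ω else if G.Adj i j then 1 else 0

/-- The graph code of `G`: the `GF(2)`-linear span of the rows of `Γ + ωI`. -/
def graphCode {n : ℕ} (ω : GaloisField 2 2) (G : SimpleGraph (Fin n)) :
    Submodule (ZMod 2) (Fin n → GaloisField 2 2) :=
  Submodule.span (ZMod 2) (Set.range (graphRow ω G))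

/-- A code equivalence map of `GF(4)^n`: a permutation of coordinates followed by
nonzero scalings and possible conjugations (`x ↦ x²`) of coordinates. -/
def IsEquivMap {n : ℕ}
    (f : (Fin n → GaloisField 2 2) → (Fin n → GaloisField 2 2)) : Prop :=
  ∃ (σ : Equiv.Perm (Fin n)) (c : Fin n → GaloisField 2 2) (e : Fin n → ℕ),
    (∀ i, c i ≠ 0) ∧ (∀ i, e i = 1 ∨ e i = 2) ∧
    ∀ u i, f u i = c i * (u (σ i)) ^ (e i)

set_option linter.unusedSectionVars false
set_option maxHeartbeats 1600000

local notation "F" => GaloisField 2 2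
local notation "ι" => algebraMap (ZMod 2) F

lemma two_eq_zero' : (2 : F) = 0 := by
  have h := (algebraMap (ZMod 2) F).map_add 1 1
  simp only [map_one] at h
  have h2 : ((1:ZMod 2) + 1) = 0 := by decide
  rw [h2, map_zero] at h
  norm_num at h ⊢
  exact h.symm

lemma zmod2_cases (c : ZMod 2) : c = 0 ∨ c = 1 := by revert c; decide

section
variable {ω : F} (hω : ω ^ 2 = ω + 1)

include hω

lemma omega_ne_zero' : ω ≠ 0 := by rintro rfl; simp at hω

lemma omega_ne_one' : ω ≠ 1 := by rintro rfl; simp at hω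

lemma classify' (x : F) : x = 0 ∨ x = 1 ∨ x = ω ∨ x = ω + 1 := by
  haveI : Fintype F := Fintype.ofFinite F
  have hc : Fintype.card F = 4 := by
    have := GaloisField.card 2 2 (by norm_num)
    simpa [Nat.card_eq_fintype_card] using this
  have h0 : ω ≠ 0 := omega_ne_zero' hω
  have h1 : ω ≠ 1 := omega_ne_one' hω
  have hne3 : ω + 1 ≠ 0 := by
    intro h
    have : ω = 1 := by linear_combination h - two_eq_zero'
    exact h1 this
  have hne4 : ω + 1 ≠ 1 := by intro h; exact h0 (by linear_combination h)
  have hne5 : ω + 1 ≠ ω := by intro h; exact one_ne_zero (by linear_combination h)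
  have hs : ({0, 1, ω, ω + 1} : Finset F).card = 4 := by
    rw [Finset.card_insert_of_notMem (by simp [h0.symm, Ne.symm h1, hne3.symm]),
        Finset.card_insert_of_notMem (by simp [Ne.symm h1, hne4.symm]),
        Finset.card_insert_of_notMem (by simp [hne5.symm]), Finset.card_singleton]
  have huniv : ({0, 1, ω, ω + 1} : Finset F) = Finset.univ :=
    Finset.eq_univ_of_card _ (by rw [hs, hc])
  have : x ∈ ({0, 1, ω, ω + 1} : Finset F) := by rw [huniv]; exact Finset.mem_univ x
  simpa using this

omit hω

lemma t11' : (1:F) + 1 = 0 := by linear_combination two_eq_zero'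
lemma tωω' : ω + ω = 0 := by linear_combination ω * two_eq_zero'
lemma tAA' : (ω + 1) + (ω + 1) = 0 := by linear_combination (ω+1) * two_eq_zero'
lemma t1ω' : (1:F) + ω = ω + 1 := by ring
lemma t1A' : (1:F) + (ω + 1) = ω := by linear_combination two_eq_zero'
lemma tA1' : (ω + 1) + 1 = ω := by linear_combination two_eq_zero'
lemma tωA' : ω + (ω + 1) = 1 := by linear_combination ω * two_eq_zero'
lemma tAω' : (ω + 1) + ω = 1 := by linear_combination ω * two_eq_zero'

include hω
lemma mωω' : ω * ω = ω + 1 := by linear_combination hω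
lemma mωA' : ω * (ω + 1) = 1 := by linear_combination hω + ω * two_eq_zero'
lemma mAω' : (ω + 1) * ω = 1 := by linear_combination hω + ω * two_eq_zero'
lemma mAA' : (ω + 1) * (ω + 1) = ω := by linear_combination hω + (ω+1) * two_eq_zero'

lemma neA0 : ω + 1 ≠ 0 := by
  intro h; exact omega_ne_one' hω (by linear_combination h - two_eq_zero')
lemma neA1 : ω + 1 ≠ 1 := by intro h; exact omega_ne_zero' hω (by linear_combination h)
lemma neAω : ω + 1 ≠ ω := by intro h; exact one_ne_zero (by linear_combination h)
omit hω

def acomp (ω x : F) : ZMod 2 := if x = 1 ∨ x = ω + 1 then 1 else 0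
def bcomp (ω x : F) : ZMod 2 := if x = ω ∨ x = ω + 1 then 1 else 0

include hω

lemma a0 : acomp ω 0 = 0 := by
  simp [acomp, (one_ne_zero (α := F)).symm, (neA0 hω).symm]
lemma a1 : acomp ω 1 = 1 := by simp [acomp]
lemma aω : acomp ω ω = 0 := by
  simp [acomp, omega_ne_one' hω, neAω hω |>.symm]
lemma aA : acomp ω (ω + 1) = 1 := by simp [acomp]
lemma b0 : bcomp ω 0 = 0 := by
  simp [bcomp, (omega_ne_zero' hω).symm, (neA0 hω).symm]
lemma b1 : bcomp ω 1 = 0 := by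
  simp [bcomp, omega_ne_one' hω |>.symm, neA1 hω |>.symm]
lemma bω : bcomp ω ω = 1 := by simp [bcomp]
lemma bA : bcomp ω (ω + 1) = 1 := by simp [bcomp]

lemma acomp_add (x y : F) : acomp ω (x + y) = acomp ω x + acomp ω y := by
  rcases classify' hω x with rfl | rfl | rfl | rfl <;>
    rcases classify' hω y with rfl | rfl | rfl | rfl <;>
    simp only [zero_add, add_zero, t11', tωω', tAA', t1ω', t1A', tA1', tωA', tAω',
      a0 hω, a1 hω, aω hω, aA hω] <;> decide

lemma bcomp_add (x y : F) : bcomp ω (x + y) = bcomp ω x + bcomp ω y := by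
  rcases classify' hω x with rfl | rfl | rfl | rfl <;>
    rcases classify' hω y with rfl | rfl | rfl | rfl <;>
    simp only [zero_add, add_zero, t11', tωω', tAA', t1ω', t1A', tA1', tωA', tAω',
      b0 hω, b1 hω, bω hω, bA hω] <;> decide

lemma recon (x : F) : ι (acomp ω x) + ι (bcomp ω x) * ω = x := by
  rcases classify' hω x with rfl | rfl | rfl | rfl <;>
    simp only [a0 hω, a1 hω, aω hω, aA hω, b0 hω, b1 hω, bω hω, bA hω,
      map_zero, map_one, zero_add, add_zero, one_mul, zero_mul, t1ω']

lemma acomp_recon (a b : ZMod 2) : acomp ω (ι a + ι b * ω) = a := by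
  rcases zmod2_cases a with rfl | rfl <;> rcases zmod2_cases b with rfl | rfl <;>
    simp only [map_zero, map_one, zero_add, add_zero, zero_mul, one_mul, t1ω',
      a0 hω, a1 hω, aω hω, aA hω]

lemma bcomp_recon (a b : ZMod 2) : bcomp ω (ι a + ι b * ω) = b := by
  rcases zmod2_cases a with rfl | rfl <;> rcases zmod2_cases b with rfl | rfl <;>
    simp only [map_zero, map_one, zero_add, add_zero, zero_mul, one_mul, t1ω',
      b0 hω, b1 hω, bω hω, bA hω]

lemma trace_eq (x y : F) :
    x * y ^ 2 + x ^ 2 * y = ι (acomp ω x * bcomp ω y + bcomp ω x * acomp ω y) := by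
  rcases classify' hω x with rfl | rfl | rfl | rfl <;>
    rcases classify' hω y with rfl | rfl | rfl | rfl <;>
    simp only [a0 hω, a1 hω, aω hω, aA hω, b0 hω, b1 hω, bω hω, bA hω,
      map_add, map_mul, map_zero, map_one,
      mul_zero, zero_mul, mul_one, one_mul, add_zero, zero_add,
      pow_two, mωω' hω, mωA' hω, mAω' hω, mAA' hω,
      t11', tωω', tAA', t1ω', t1A', tA1', tωA', tAω']

lemma swap_id (x : F) : ι (bcomp ω x) + ι (acomp ω x) * ω = ω * x ^ 2 := by
  rcases classify' hω x with rfl | rfl | rfl | rfl <;>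
    simp only [a0 hω, a1 hω, aω hω, aA hω, b0 hω, b1 hω, bω hω, bA hω,
      map_add, map_mul, map_zero, map_one,
      mul_zero, zero_mul, mul_one, one_mul, add_zero, zero_add,
      pow_two, mωω' hω, mωA' hω, mAω' hω, mAA' hω,
      t11', tωω', tAA', t1ω', t1A', tA1', tωA', tAω']

lemma conj_id (x : F) : ι (acomp ω x + bcomp ω x) + ι (bcomp ω x) * ω = x ^ 2 := by
  rcases classify' hω x with rfl | rfl | rfl | rfl <;>
    simp only [a0 hω, a1 hω, aω hω, aA hω, b0 hω, b1 hω, bω hω, bA hω,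
      map_add, map_mul, map_zero, map_one,
      mul_zero, zero_mul, mul_one, one_mul, add_zero, zero_add,
      pow_two, mωω' hω, mωA' hω, mAω' hω, mAA' hω,
      t11', tωω', tAA', t1ω', t1A', tA1', tωA', tAω']

lemma both_id (x : F) : ι (acomp ω x + bcomp ω x) + ι (acomp ω x) * ω = ω ^ 2 * x := by
  rcases classify' hω x with rfl | rfl | rfl | rfl <;>
    simp only [a0 hω, a1 hω, aω hω, aA hω, b0 hω, b1 hω, bω hω, bA hω,
      map_add, map_mul, map_zero, map_one,
      mul_zero, zero_mul, mul_one, one_mul, add_zero, zero_add,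
      pow_two, mωω' hω, mωA' hω, mAω' hω, mAA' hω,
      t11', tωω', tAA', t1ω', t1A', tA1', tωA', tAω']

omit hω
end

section
variable {ω : F} {n : ℕ}

/-- `ψ`: from GF(2)-pairs to GF(4) vectors. -/
def psiL (ω : F) (n : ℕ) :
    ((Fin n → ZMod 2) × (Fin n → ZMod 2)) →ₗ[ZMod 2] (Fin n → F) where
  toFun p := fun i => ι (p.1 i) + ι (p.2 i) * ω
  map_add' p q := by
    funext i
    simp only [Prod.fst_add, Prod.snd_add, Pi.add_apply, map_add, Pi.add_apply]
    ring
  map_smul' c p := by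
    rcases zmod2_cases c with rfl | rfl <;> funext i <;>
      simp [Prod.smul_fst, Prod.smul_snd, Pi.smul_apply]

/-- `φ`: from GF(4) vectors to GF(2)-pairs. -/
def phiL {ω : F} (hω : ω ^ 2 = ω + 1) (n : ℕ) :
    (Fin n → F) →ₗ[ZMod 2] ((Fin n → ZMod 2) × (Fin n → ZMod 2)) where
  toFun u := (fun i => acomp ω (u i), fun i => bcomp ω (u i))
  map_add' u v := by
    refine Prod.ext ?_ ?_ <;> funext i <;>
      simp [acomp_add hω, bcomp_add hω]
  map_smul' c u := by
    rcases zmod2_cases c with rfl | rfl <;> refine Prod.ext ?_ ?_ <;> funext i <;>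
      simp [a0 hω, b0 hω]

variable (hω : ω ^ 2 = ω + 1)

lemma phi_psi (p) : phiL hω n (psiL ω n p) = p := by
  refine Prod.ext ?_ ?_ <;> funext i <;>
    simp [phiL, psiL, acomp_recon hω, bcomp_recon hω]

lemma psi_phi (u) : psiL ω n (phiL hω n u) = u := by
  funext i; simp [phiL, psiL, recon hω]

/-- `φ` as a linear equivalence. -/
def phiE {ω : F} (hω : ω ^ 2 = ω + 1) (n : ℕ) :
    (Fin n → F) ≃ₗ[ZMod 2] ((Fin n → ZMod 2) × (Fin n → ZMod 2)) :=
  LinearEquiv.ofLinear (phiL hω n) (psiL ω n)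
    (by ext p <;> simp [phi_psi hω]) (by ext u <;> simp [psi_phi hω])

/-- The binary symplectic form. -/
def Om (n : ℕ) : LinearMap.BilinForm (ZMod 2) ((Fin n → ZMod 2) × (Fin n → ZMod 2)) :=
  LinearMap.mk₂ (ZMod 2) (fun p q => ∑ i, (p.1 i * q.2 i + p.2 i * q.1 i))
    (fun p p' q => by
      rw [← Finset.sum_add_distrib]
      exact Finset.sum_congr rfl fun i _ => by
        simp only [Prod.fst_add, Prod.snd_add, Pi.add_apply]; ring)
    (fun c p q => by
      rw [smul_eq_mul, Finset.mul_sum]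
      exact Finset.sum_congr rfl fun i _ => by
        simp only [Prod.smul_fst, Prod.smul_snd, Pi.smul_apply, smul_eq_mul]; ring)
    (fun p q q' => by
      rw [← Finset.sum_add_distrib]
      exact Finset.sum_congr rfl fun i _ => by
        simp only [Prod.fst_add, Prod.snd_add, Pi.add_apply]; ring)
    (fun c p q => by
      rw [smul_eq_mul, Finset.mul_sum]
      exact Finset.sum_congr rfl fun i _ => by
        simp only [Prod.smul_fst, Prod.smul_snd, Pi.smul_apply, smul_eq_mul]; ring)

lemma Om_apply (p q : (Fin n → ZMod 2) × (Fin n → ZMod 2)) :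
    Om n p q = ∑ i, (p.1 i * q.2 i + p.2 i * q.1 i) := rfl

lemma Om_symm (p q : (Fin n → ZMod 2) × (Fin n → ZMod 2)) : Om n p q = Om n q p := by
  rw [Om_apply, Om_apply]
  exact Finset.sum_congr rfl fun i _ => by ring

lemma Om_refl : (Om n).IsRefl := fun p q h => by rw [Om_symm]; exact h

lemma dot_single (v : Fin n → ZMod 2) (i : Fin n) :
    ∑ j, v j * (Pi.single i 1 : Fin n → ZMod 2) j = v i := by
  simp [Pi.single_apply, mul_ite]

lemma single_dot (v : Fin n → ZMod 2) (i : Fin n) :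
    ∑ j, (Pi.single i 1 : Fin n → ZMod 2) j * v j = v i := by
  simp [Pi.single_apply, ite_mul]

lemma Om_nondeg : (Om n).Nondegenerate := by
  refine (LinearMap.IsRefl.nondegenerate_iff_separatingLeft Om_refl).mpr ?_
  rintro ⟨p1, p2⟩ hp
  have h1 : ∀ i, p1 i = 0 := fun i => by
    have h := hp (0, (Pi.single i 1 : Fin n → ZMod 2))
    rw [Om_apply] at h
    simp only [Pi.zero_apply, mul_zero, add_zero, zero_mul] at h
    rwa [dot_single] at h
  have h2 : ∀ i, p2 i = 0 := fun i => by
    have h := hp ((Pi.single i 1 : Fin n → ZMod 2), 0)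
    rw [Om_apply] at h
    simp only [Pi.zero_apply, mul_zero, add_zero, zero_add, zero_mul] at h
    rwa [dot_single] at h
  refine Prod.ext ?_ ?_ <;> funext i <;> simp [h1 i, h2 i]

end

section
variable {ω : F} {n : ℕ}

lemma sum_single' (v : Fin n → ZMod 2) :
    ∑ i, (Pi.single i (v i) : Fin n → ZMod 2) = v := by
  funext j
  rw [Finset.sum_apply]
  simp [Pi.single_apply]

lemma single_eq_smul (i : Fin n) (c : ZMod 2) :
    (Pi.single i c : Fin n → ZMod 2) = c • (Pi.single i 1 : Fin n → ZMod 2) := by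
  funext j
  simp only [Pi.smul_apply, Pi.single_apply, smul_eq_mul]
  split <;> simp

/-- Every subspace of `F₂ⁿ` has a coordinate set on which it projects bijectively. -/
lemma exists_good_set (K : Submodule (ZMod 2) (Fin n → ZMod 2)) :
    ∃ S : Set (Fin n),
      (∀ v ∈ K, (∀ i ∈ S, v i = 0) → v = 0) ∧
      (∀ g : Fin n → ZMod 2, ∃ v ∈ K, ∀ i ∈ S, v i = g i) := by
  obtain ⟨t, htK, htspan, htind⟩ :=
    exists_linearIndependent (ZMod 2) (K : Set (Fin n → ZMod 2))
  rw [Submodule.span_eq] at htspan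
  set std : Set (Fin n → ZMod 2) :=
    Set.range (fun i => (Pi.single i 1 : Fin n → ZMod 2)) with hstddef
  obtain ⟨b, hbsub, htb, hbspan, hbind'⟩ :=
    exists_linearIndepOn_id_extension htind (Set.subset_union_left (t := std))
  have hbind : LinearIndependent (ZMod 2) ((↑) : b → Fin n → ZMod 2) := hbind'
  have hstdspan : ∀ v : Fin n → ZMod 2, v ∈ Submodule.span (ZMod 2) std := by
    intro v
    rw [← sum_single' v]
    refine Submodule.sum_mem _ fun i _ => ?_
    rw [single_eq_smul]
    exact Submodule.smul_mem _ _ (Submodule.subset_span ⟨i, rfl⟩)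
  have hbtop : Submodule.span (ZMod 2) b = ⊤ := by
    rw [eq_top_iff]
    intro v _
    have h1 : Submodule.span (ZMod 2) (t ∪ std) ≤ Submodule.span (ZMod 2) b :=
      Submodule.span_le.mpr hbspan
    exact h1 (Submodule.span_mono Set.subset_union_right (hstdspan v))
  set T : Set (Fin n) := {i | (Pi.single i 1 : Fin n → ZMod 2) ∈ b \ t} with hTdef
  have hbt : b \ t ⊆ (fun i => (Pi.single i 1 : Fin n → ZMod 2)) '' T := by
    rintro v ⟨hvb, hvt⟩
    rcases hbsub hvb with hvIn | ⟨i, rfl⟩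
    · exact absurd hvIn hvt
    · exact ⟨i, ⟨hvb, hvt⟩, rfl⟩
  have hdisj : Disjoint (Submodule.span (ZMod 2) t) (Submodule.span (ZMod 2) (b \ t)) := by
    have h := hbind.disjoint_span_image
      (s := (↑) ⁻¹' t) (t := (↑) ⁻¹' (b \ t)) ?_
    · have h1 : (Subtype.val : b → Fin n → ZMod 2) '' ((↑) ⁻¹' t) = t := by
        rw [Subtype.image_preimage_coe]
        exact Set.inter_eq_self_of_subset_right htb
      have h2 : (Subtype.val : b → Fin n → ZMod 2) '' ((↑) ⁻¹' (b \ t)) = b \ t := by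
        rw [Subtype.image_preimage_coe]
        exact Set.inter_eq_self_of_subset_right Set.diff_subset
      rwa [h1, h2] at h
    · rw [Set.disjoint_iff]
      rintro ⟨v, hvb⟩ ⟨hv1, hv2⟩
      exact hv2.2 hv1
  refine ⟨Tᶜ, ?_, ?_⟩
  · intro v hvK hvS
    have hv1 : v ∈ Submodule.span (ZMod 2) t := by rw [htspan]; exact hvK
    have hv2 : v ∈ Submodule.span (ZMod 2) (b \ t) := by
      rw [← sum_single' v]
      refine Submodule.sum_mem _ fun i _ => ?_
      by_cases hi : i ∈ T
      · rw [single_eq_smul]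
        refine Submodule.smul_mem _ _ (Submodule.subset_span hi)
      · rw [hvS i hi, Pi.single_zero]
        exact Submodule.zero_mem _
    exact Submodule.disjoint_def.mp hdisj v hv1 hv2
  · intro g
    set gbar : Fin n → ZMod 2 := fun i => if i ∈ Tᶜ then g i else 0 with hgbar
    have : gbar ∈ Submodule.span (ZMod 2) t ⊔ Submodule.span (ZMod 2) (b \ t) := by
      rw [← Submodule.span_union, Set.union_diff_self,
        Set.union_eq_self_of_subset_left htb, hbtop]
      trivial
    have hzS : ∀ z ∈ Submodule.span (ZMod 2) (b \ t), ∀ i ∈ Tᶜ, z i = 0 := by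
      intro z hz i hi
      induction hz using Submodule.span_induction with
      | mem x hx =>
        obtain ⟨j, hj, rfl⟩ := hbt hx
        simp only [Pi.single_apply]
        rw [if_neg]
        rintro rfl
        exact hi hj
      | zero => rfl
      | add x y _ _ hx hy => rw [Pi.add_apply, hx, hy, add_zero]
      | smul c x _ hx => rw [Pi.smul_apply, hx, smul_zero]
    obtain ⟨v, hv, z, hz, hsum⟩ := Submodule.mem_sup.mp this
    refine ⟨v, by rw [← htspan]; exact hv, fun i hi => ?_⟩
    have h := congrFun hsum i
    rw [Pi.add_apply] at h
    rw [hzS z hz i hi, add_zero] at h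
    rw [h, hgbar]
    simp [hi]

end

section
variable {n : ℕ}

lemma zh1 : ∀ a b : ZMod 2, a + b + b = a := by decide
lemma zh2 : ∀ a b : ZMod 2, b + (a + b) = a := by decide
lemma zh3 : ∀ a b : ZMod 2, a + b + a = b := by decide
lemma zadd_eq : ∀ x y : ZMod 2, x + y = 0 → x = y := by decide

/-- local swap (on `S`) followed by local conjugation (on `T`), at the binary level. -/
def tauL (S T : Set (Fin n)) :
    ((Fin n → ZMod 2) × (Fin n → ZMod 2)) →ₗ[ZMod 2] ((Fin n → ZMod 2) × (Fin n → ZMod 2)) where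
  toFun p := (fun i => if i ∈ T then p.1 i + p.2 i else if i ∈ S then p.2 i else p.1 i,
              fun i => if i ∈ S then p.1 i else p.2 i)
  map_add' p q := by
    refine Prod.ext ?_ ?_ <;> funext i <;>
      simp only [Prod.fst_add, Prod.snd_add, Pi.add_apply] <;>
      split_ifs <;> ring
  map_smul' c p := by
    rcases zmod2_cases c with rfl | rfl <;> refine Prod.ext ?_ ?_ <;> funext i <;>
      simp only [Prod.smul_fst, Prod.smul_snd, Pi.smul_apply, smul_eq_mul, zero_mul, one_mul,
        RingHom.id_apply, zero_smul, one_smul, Prod.fst_zero, Prod.snd_zero, Pi.zero_apply] <;>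
      split_ifs <;> simp

/-- the inverse of `tauL`. -/
def rhoL (S T : Set (Fin n)) :
    ((Fin n → ZMod 2) × (Fin n → ZMod 2)) →ₗ[ZMod 2] ((Fin n → ZMod 2) × (Fin n → ZMod 2)) where
  toFun p := (fun i => if i ∈ S then p.2 i else if i ∈ T then p.1 i + p.2 i else p.1 i,
              fun i => if i ∈ S then (if i ∈ T then p.1 i + p.2 i else p.1 i) else p.2 i)
  map_add' p q := by
    refine Prod.ext ?_ ?_ <;> funext i <;>
      simp only [Prod.fst_add, Prod.snd_add, Pi.add_apply] <;>
      split_ifs <;> ring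
  map_smul' c p := by
    rcases zmod2_cases c with rfl | rfl <;> refine Prod.ext ?_ ?_ <;> funext i <;>
      simp only [Prod.smul_fst, Prod.smul_snd, Pi.smul_apply, smul_eq_mul, zero_mul, one_mul,
        RingHom.id_apply, zero_smul, one_smul, Prod.fst_zero, Prod.snd_zero, Pi.zero_apply] <;>
      split_ifs <;> simp

lemma tau_rho (S T : Set (Fin n)) (p) : tauL S T (rhoL S T p) = p := by
  refine Prod.ext ?_ ?_ <;> funext i <;>
    simp only [tauL, rhoL, LinearMap.coe_mk, AddHom.coe_mk] <;>
    by_cases hS : i ∈ S <;> by_cases hT : i ∈ T <;>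
    simp [hS, hT, zh1, zh2, zh3]

lemma rho_tau (S T : Set (Fin n)) (p) : rhoL S T (tauL S T p) = p := by
  refine Prod.ext ?_ ?_ <;> funext i <;>
    simp only [tauL, rhoL, LinearMap.coe_mk, AddHom.coe_mk] <;>
    by_cases hS : i ∈ S <;> by_cases hT : i ∈ T <;>
    simp [hS, hT, zh1, zh2, zh3]

/-- `tauL` as a linear equivalence. -/
def tauE (S T : Set (Fin n)) :
    ((Fin n → ZMod 2) × (Fin n → ZMod 2)) ≃ₗ[ZMod 2] ((Fin n → ZMod 2) × (Fin n → ZMod 2)) :=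
  LinearEquiv.ofLinear (tauL S T) (rhoL S T)
    (LinearMap.ext fun p => by rw [LinearMap.comp_apply, tau_rho]; rfl)
    (LinearMap.ext fun p => by rw [LinearMap.comp_apply, rho_tau]; rfl)

lemma tau_Om (S T : Set (Fin n)) (p q) :
    Om n (tauL S T p) (tauL S T q) = Om n p q := by
  rw [Om_apply, Om_apply]
  refine Finset.sum_congr rfl fun i _ => ?_
  simp only [tauL, LinearMap.coe_mk, AddHom.coe_mk]
  by_cases hS : i ∈ S <;> by_cases hT : i ∈ T <;> simp only [hS, hT, if_pos, if_neg,
    if_true, if_false] <;>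
    first
      | rfl
      | exact (by decide : ∀ a b c d : ZMod 2,
          (a + b) * c + a * (c + d) = a * d + b * c) _ _ _ _
      | exact (by decide : ∀ a b c d : ZMod 2,
          (a + b) * d + b * (c + d) = a * d + b * c) _ _ _ _
      | exact (by decide : ∀ a b c d : ZMod 2,
          b * c + a * d = a * d + b * c) _ _ _ _

end

section
variable {ω : F} {n : ℕ}

lemma trinner_eq (hω : ω ^ 2 = ω + 1) (u v : Fin n → F) :
    trinner u v = ι (Om n (phiL hω n u) (phiL hω n v)) := by
  rw [trinner, Om_apply, map_sum]
  exact Finset.sum_congr rfl fun i _ => trace_eq hω (u i) (v i)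

end

open Module

theorem stmt5 (n : ℕ) (ω : GaloisField 2 2) (hω : ω ^ 2 = ω + 1)
    (C : Submodule (ZMod 2) (Fin n → GaloisField 2 2))
    (hC : (C : Set (Fin n → GaloisField 2 2)) = trdual (C : Set (Fin n → GaloisField 2 2))) :
    ∃ (G : SimpleGraph (Fin n))
      (f : (Fin n → GaloisField 2 2) → (Fin n → GaloisField 2 2)),
      IsEquivMap f ∧ f '' (C : Set (Fin n → GaloisField 2 2)) =
        (graphCode ω G : Set (Fin n → GaloisField 2 2)) := by
  classical
  have hι : Function.Injective (algebraMap (ZMod 2) F) := (algebraMap (ZMod 2) F).injective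
  set D : Submodule (ZMod 2) ((Fin n → ZMod 2) × (Fin n → ZMod 2)) :=
    C.map (phiL hω n) with hDdef
  have hmemD : ∀ p, p ∈ D ↔ psiL ω n p ∈ C := by
    intro p
    constructor
    · intro hp
      obtain ⟨u, hu, rfl⟩ := Submodule.mem_map.mp hp
      rwa [psi_phi hω]
    · intro h
      exact Submodule.mem_map.mpr ⟨psiL ω n p, h, phi_psi hω p⟩
  have hphimem : ∀ u ∈ C, phiL hω n u ∈ D := fun u hu =>
    Submodule.mem_map.mpr ⟨u, hu, rfl⟩
  have hDD : ∀ p ∈ D, ∀ q ∈ D, Om n p q = 0 := by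
    intro p hp q hq
    obtain ⟨u, hu, rfl⟩ := Submodule.mem_map.mp hp
    obtain ⟨v, hv, rfl⟩ := Submodule.mem_map.mp hq
    have hv' : v ∈ trdual (C : Set (Fin n → F)) := by rw [← hC]; exact hv
    have h := hv' u hu
    rw [trinner_eq hω] at h
    exact hι (by rw [map_zero]; exact h)
  have hDual : ∀ p, (∀ q ∈ D, Om n q p = 0) → p ∈ D := by
    intro p hp
    rw [hmemD]
    have hmem : psiL ω n p ∈ trdual (C : Set (Fin n → F)) := by
      intro u hu
      rw [trinner_eq hω, phi_psi hω, hp (phiL hω n u) (hphimem u hu), map_zero]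
    have h2 : psiL ω n p ∈ (C : Set (Fin n → F)) := by rw [hC]; exact hmem
    exact h2
  have hD : D = (Om n).orthogonal D := by
    refine le_antisymm ?_ ?_
    · intro p hp
      rw [LinearMap.BilinForm.mem_orthogonal_iff]
      intro q hq
      exact hDD q hq p hp
    · intro p hp
      rw [LinearMap.BilinForm.mem_orthogonal_iff] at hp
      exact hDual p hp
  have hVrank : finrank (ZMod 2) ((Fin n → ZMod 2) × (Fin n → ZMod 2)) = n + n := by
    rw [Module.finrank_prod, Module.finrank_pi, Fintype.card_fin]
  have hDrank : finrank (ZMod 2) D = n := by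
    have h := LinearMap.BilinForm.finrank_orthogonal (Om_nondeg (n := n)) D
    rw [← hD, hVrank] at h
    have h2 : finrank (ZMod 2) D ≤ n + n := hVrank ▸ Submodule.finrank_le D
    omega
  -- the kernel subspace K
  set K : Submodule (ZMod 2) (Fin n → ZMod 2) :=
    D.comap (LinearMap.inl (ZMod 2) (Fin n → ZMod 2) (Fin n → ZMod 2)) with hKdef
  have hKmem : ∀ a : Fin n → ZMod 2, a ∈ K ↔ ((a, 0) : (Fin n → ZMod 2) × (Fin n → ZMod 2)) ∈ D := by
    intro a
    rw [hKdef, Submodule.mem_comap, LinearMap.inl_apply]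
  obtain ⟨S, hSinj, hSsurj⟩ := exists_good_set K
  set D1 := D.map (tauE S ∅).toLinearMap with hD1def
  have hD1rank : finrank (ZMod 2) D1 = n := by
    rw [hD1def, LinearEquiv.finrank_map_eq]; exact hDrank
  have hD1iso : ∀ p ∈ D1, ∀ q ∈ D1, Om n p q = 0 := by
    intro p hp q hq
    obtain ⟨p0, hp0, rfl⟩ := Submodule.mem_map.mp hp
    obtain ⟨q0, hq0, rfl⟩ := Submodule.mem_map.mp hq
    exact (tau_Om S ∅ p0 q0).trans (hDD p0 hp0 q0 hq0)
  have hker1 : ∀ a : Fin n → ZMod 2,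
      ((a, 0) : (Fin n → ZMod 2) × (Fin n → ZMod 2)) ∈ D1 → a = 0 := by
    intro a ha
    have h := (Submodule.mem_map_equiv _).mp ha
    have heq : (tauE S (∅ : Set (Fin n))).symm ((a, 0) : (Fin n → ZMod 2) × (Fin n → ZMod 2))
        = ((fun i => if i ∈ S then 0 else a i, fun i => if i ∈ S then a i else 0) :
          (Fin n → ZMod 2) × (Fin n → ZMod 2)) := by
      show rhoL S ∅ ((a, 0) : (Fin n → ZMod 2) × (Fin n → ZMod 2)) = _
      refine Prod.ext ?_ ?_ <;> funext i <;>
        simp [rhoL, Set.mem_empty_iff_false]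
    rw [heq] at h
    set q1 : Fin n → ZMod 2 := fun i => if i ∈ S then 0 else a i with hq1def
    set q2 : Fin n → ZMod 2 := fun i => if i ∈ S then a i else 0 with hq2def
    have hq2K : ∀ v ∈ K, ∑ i, v i * q2 i = 0 := by
      intro v hv
      have h0 := hDD ((v, 0) : (Fin n → ZMod 2) × (Fin n → ZMod 2)) ((hKmem v).mp hv) (q1, q2) h
      rw [Om_apply] at h0
      simpa using h0
    have hq2z : ∀ i, q2 i = 0 := by
      intro i
      by_cases hiS : i ∈ S
      · obtain ⟨v, hvK, hvS⟩ := hSsurj (Pi.single i 1)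
        have h0 := hq2K v hvK
        have hsum : ∑ j, v j * q2 j = q2 i := by
          rw [Finset.sum_eq_single i]
          · rw [hvS i hiS, Pi.single_eq_same, one_mul]
          · intro j _ hji
            by_cases hjS : j ∈ S
            · rw [hvS j hjS, Pi.single_eq_of_ne hji, zero_mul]
            · have hz : q2 j = 0 := by simp [hq2def, hjS]
              rw [hz, mul_zero]
          · intro hmem
            exact absurd (Finset.mem_univ i) hmem
        rw [hsum] at h0
        exact h0
      · simp [hq2def, hiS]
    have hq20 : q2 = 0 := funext hq2z
    rw [hq20] at h
    have hq1K : q1 ∈ K := (hKmem q1).mpr h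
    have hq10 : q1 = 0 := hSinj q1 hq1K (fun i hi => by simp [hq1def, hi])
    funext i
    by_cases hiS : i ∈ S
    · have h1 := hq2z i
      simpa [hq2def, hiS] using h1
    · have h1 := congrFun hq10 i
      simpa [hq1def, hiS] using h1
  -- surjectivity of the second projection on D1
  have hsnd : ∀ g : Fin n → ZMod 2, ∃ p, p ∈ D1 ∧ p.2 = g := by
    set sl := (LinearMap.snd (ZMod 2) (Fin n → ZMod 2) (Fin n → ZMod 2)).comp D1.subtype
      with hsldef
    have hker : LinearMap.ker sl = ⊥ := by
      rw [LinearMap.ker_eq_bot']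
      rintro ⟨p, hp⟩ hps
      have h2 : p.2 = 0 := hps
      have hp' : ((p.1, 0) : (Fin n → ZMod 2) × (Fin n → ZMod 2)) ∈ D1 := by
        rw [show ((p.1, (0 : Fin n → ZMod 2)) : (Fin n → ZMod 2) × (Fin n → ZMod 2)) = p from
          Prod.ext rfl h2.symm]
        exact hp
      have h1 := hker1 p.1 hp'
      apply Subtype.ext
      show p = 0
      refine Prod.ext ?_ ?_
      · rw [h1]; rfl
      · rw [h2]; rfl
    have hrange : LinearMap.range sl = ⊤ := by
      apply Submodule.eq_top_of_finrank_eq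
      have h := LinearMap.finrank_range_add_finrank_ker sl
      rw [hker, finrank_bot, add_zero] at h
      rw [h, hD1rank, Module.finrank_pi, Fintype.card_fin]
    intro g
    have hg : g ∈ LinearMap.range sl := by rw [hrange]; trivial
    obtain ⟨⟨p, hp⟩, hpg⟩ := hg
    exact ⟨p, hp, hpg⟩
  choose gv hgv using fun i => hsnd (Pi.single i (1 : ZMod 2))
  have hgmem : ∀ i, gv i ∈ D1 := fun i => (hgv i).1
  have hgsnd : ∀ i, (gv i).2 = Pi.single i 1 := fun i => (hgv i).2
  have hAsymm : ∀ i j, (gv i).1 j = (gv j).1 i := by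
    intro i j
    have h := hD1iso (gv i) (hgmem i) (gv j) (hgmem j)
    rw [Om_apply] at h
    simp only [hgsnd] at h
    rw [Finset.sum_add_distrib, dot_single, single_dot] at h
    exact zadd_eq _ _ h
  set T : Set (Fin n) := {i | (gv i).1 i = 1} with hTdef
  set g' : Fin n → (Fin n → ZMod 2) × (Fin n → ZMod 2) := fun i => tauL ∅ T (gv i) with hg'def
  set D2 := D1.map (tauE (∅ : Set (Fin n)) T).toLinearMap with hD2def
  have hg'mem : ∀ i, g' i ∈ D2 := fun i => Submodule.mem_map.mpr ⟨gv i, hgmem i, rfl⟩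
  have hg'snd : ∀ i, (g' i).2 = Pi.single i 1 := by
    intro i
    funext j
    simp only [hg'def, tauL, LinearMap.coe_mk, AddHom.coe_mk]
    rw [if_neg (Set.notMem_empty j), hgsnd i]
  have hg'fst : ∀ i j, (g' i).1 j =
      if j ∈ T then (gv i).1 j + (Pi.single i 1 : Fin n → ZMod 2) j else (gv i).1 j := by
    intro i j
    simp only [hg'def, tauL, LinearMap.coe_mk, AddHom.coe_mk]
    rw [hgsnd i]
    by_cases hjT : j ∈ T
    · rw [if_pos hjT, if_pos hjT]
    · rw [if_neg hjT, if_neg hjT, if_neg (Set.notMem_empty j)]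
  have hdiag : ∀ i, (g' i).1 i = 0 := by
    intro i
    rw [hg'fst]
    by_cases hiT : i ∈ T
    · rw [if_pos hiT, Pi.single_eq_same]
      have h1 : (gv i).1 i = 1 := hiT
      rw [h1]
      decide
    · rw [if_neg hiT]
      have h1 : ¬((gv i).1 i = 1) := hiT
      rcases zmod2_cases ((gv i).1 i) with h | h
      · exact h
      · exact absurd h h1
  have hoff : ∀ i j, i ≠ j → (g' i).1 j = (gv i).1 j := by
    intro i j hij
    rw [hg'fst]
    by_cases hjT : j ∈ T
    · rw [if_pos hjT, Pi.single_eq_of_ne (Ne.symm hij), add_zero]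
    · rw [if_neg hjT]
  have hker2 : ∀ a : Fin n → ZMod 2,
      ((a, 0) : (Fin n → ZMod 2) × (Fin n → ZMod 2)) ∈ D2 → a = 0 := by
    intro a ha
    have h := (Submodule.mem_map_equiv _).mp ha
    have heq : (tauE (∅ : Set (Fin n)) T).symm ((a, 0) : (Fin n → ZMod 2) × (Fin n → ZMod 2))
        = ((a, 0) : (Fin n → ZMod 2) × (Fin n → ZMod 2)) := by
      show rhoL ∅ T ((a, 0) : (Fin n → ZMod 2) × (Fin n → ZMod 2)) = _
      refine Prod.ext ?_ ?_ <;> funext i <;>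
        simp [rhoL, Set.mem_empty_iff_false]
    rw [heq] at h
    exact hker1 a h
  -- D2 is the span of the rows g'
  have hspanle : Submodule.span (ZMod 2) (Set.range g') ≤ D2 := by
    rw [Submodule.span_le]
    rintro _ ⟨i, rfl⟩
    exact hg'mem i
  have hspan : D2 = Submodule.span (ZMod 2) (Set.range g') := by
    refine le_antisymm ?_ hspanle
    intro p hp
    set s := ∑ i, p.2 i • g' i with hsdef
    have hsmem : s ∈ Submodule.span (ZMod 2) (Set.range g') :=
      Submodule.sum_mem _ fun i _ => Submodule.smul_mem _ _ (Submodule.subset_span ⟨i, rfl⟩)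
    have hs2 : s.2 = p.2 := by
      have h1 : s.2 = ∑ i, p.2 i • (g' i).2 := by
        rw [hsdef]
        calc (∑ i, p.2 i • g' i).2
            = (LinearMap.snd (ZMod 2) (Fin n → ZMod 2) (Fin n → ZMod 2)) (∑ i, p.2 i • g' i) :=
              rfl
          _ = ∑ i, (LinearMap.snd (ZMod 2) (Fin n → ZMod 2) (Fin n → ZMod 2)) (p.2 i • g' i) :=
              map_sum _ _ _
          _ = ∑ i, p.2 i • (g' i).2 := by
              refine Finset.sum_congr rfl fun i _ => ?_
              rw [map_smul]
              rfl
      rw [h1]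
      funext j
      rw [Finset.sum_apply]
      calc ∑ i, (p.2 i • (g' i).2) j
          = ∑ i, (Pi.single i (p.2 i) : Fin n → ZMod 2) j := by
            refine Finset.sum_congr rfl fun i _ => ?_
            rw [hg'snd i, ← single_eq_smul]
        _ = (∑ i, (Pi.single i (p.2 i) : Fin n → ZMod 2)) j := by rw [Finset.sum_apply]
        _ = p.2 j := by rw [sum_single']
    have hdiff : p - s ∈ D2 := Submodule.sub_mem _ hp (hspanle hsmem)
    have hdsnd : (p - s).2 = 0 := by
      show p.2 - s.2 = 0
      rw [hs2, sub_self]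
    have hpair : ((p - s).1, (0 : Fin n → ZMod 2)) = p - s := Prod.ext rfl hdsnd.symm
    have h0 := hker2 (p - s).1 (by rw [hpair]; exact hdiff)
    have hps : p - s = 0 := by
      refine Prod.ext ?_ ?_
      · rw [h0]; rfl
      · rw [hdsnd]; rfl
    rw [sub_eq_zero] at hps
    rw [hps]
    exact hsmem
  -- the graph
  set G : SimpleGraph (Fin n) :=
    { Adj := fun i j => i ≠ j ∧ (gv i).1 j = 1
      symm := ⟨by
        rintro i j ⟨hne, hval⟩
        exact ⟨hne.symm, by rw [hAsymm j i]; exact hval⟩⟩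
      loopless := ⟨by rintro i ⟨hne, _⟩; exact hne rfl⟩ } with hGdef
  have hrow : graphRow ω G = fun i => psiL ω n (g' i) := by
    funext i j
    rw [graphRow]
    show _ = ι ((g' i).1 j) + ι ((g' i).2 j) * ω
    by_cases hij : i = j
    · subst hij
      rw [if_pos rfl, hdiag i, hg'snd i, Pi.single_eq_same, map_zero, map_one, zero_add, one_mul]
    · rw [if_neg hij, hoff i j hij, hg'snd i, Pi.single_eq_of_ne (Ne.symm hij), map_zero,
        zero_mul, add_zero]
      by_cases hA : (gv i).1 j = 1
      · rw [if_pos (show G.Adj i j from ⟨hij, hA⟩), hA, map_one]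
      · rcases zmod2_cases ((gv i).1 j) with h0 | h0
        · rw [if_neg (show ¬ G.Adj i j from fun hc => hA hc.2), h0, map_zero]
        · exact absurd h0 hA
  -- the equivalence map
  refine ⟨G, fun u => psiL ω n (tauL ∅ T (tauL S ∅ (phiL hω n u))), ?_, ?_⟩
  · refine ⟨Equiv.refl _, fun i => if i ∈ S then (if i ∈ T then ω ^ 2 else ω) else 1,
      fun i => if i ∈ S then (if i ∈ T then 1 else 2) else (if i ∈ T then 2 else 1),
      ?_, ?_, ?_⟩
    · intro i
      by_cases hS : i ∈ S <;> by_cases hT : i ∈ T <;>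
        simp only [hS, hT, if_true, if_false, if_pos, if_neg]
      · exact pow_ne_zero 2 (omega_ne_zero' hω)
      · exact omega_ne_zero' hω
      · exact one_ne_zero
      · exact one_ne_zero
    · intro i
      by_cases hS : i ∈ S <;> by_cases hT : i ∈ T <;> simp [hS, hT]
    · intro u i
      simp only [Equiv.refl_apply]
      show ι ((tauL ∅ T (tauL S ∅ (phiL hω n u))).1 i)
          + ι ((tauL ∅ T (tauL S ∅ (phiL hω n u))).2 i) * ω = _
      have hc1 : (tauL ∅ T (tauL S ∅ (phiL hω n u))).1 i =
          if i ∈ T then ((if i ∈ S then bcomp ω (u i) else acomp ω (u i))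
            + (if i ∈ S then acomp ω (u i) else bcomp ω (u i)))
          else (if i ∈ S then bcomp ω (u i) else acomp ω (u i)) := by
        simp only [tauL, phiL, LinearMap.coe_mk, AddHom.coe_mk,
          Set.mem_empty_iff_false, if_false]
      have hc2 : (tauL ∅ T (tauL S ∅ (phiL hω n u))).2 i =
          if i ∈ S then acomp ω (u i) else bcomp ω (u i) := by
        simp only [tauL, phiL, LinearMap.coe_mk, AddHom.coe_mk,
          Set.mem_empty_iff_false, if_false]
      rw [hc1, hc2]
      by_cases hS : i ∈ S <;> by_cases hT : i ∈ T <;>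
        simp only [hS, hT, if_true, if_false, if_pos, if_neg]
      · rw [pow_one, add_comm (bcomp ω (u i)) (acomp ω (u i))]
        exact both_id hω (u i)
      · exact swap_id hω (u i)
      · rw [one_mul]
        exact conj_id hω (u i)
      · rw [pow_one, one_mul]
        exact recon hω (u i)
  · -- image equality
    have h1 : (fun u => psiL ω n (tauL ∅ T (tauL S ∅ (phiL hω n u)))) '' (C : Set (Fin n → F))
        = psiL ω n '' (tauL ∅ T '' (tauL S ∅ '' (phiL hω n '' (C : Set (Fin n → F))))) := by
      rw [← Set.image_comp, ← Set.image_comp, ← Set.image_comp]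
      rfl
    rw [h1]
    have h2 : phiL hω n '' (C : Set (Fin n → F)) = (D : Set ((Fin n → ZMod 2) × (Fin n → ZMod 2))) := by
      rw [hDdef, Submodule.map_coe]
    rw [h2]
    have h3 : tauL S ∅ '' (D : Set ((Fin n → ZMod 2) × (Fin n → ZMod 2)))
        = (D1 : Set ((Fin n → ZMod 2) × (Fin n → ZMod 2))) := by
      rw [hD1def, Submodule.map_coe]
      rfl
    rw [h3]
    have h4 : tauL ∅ T '' (D1 : Set ((Fin n → ZMod 2) × (Fin n → ZMod 2)))
        = (D2 : Set ((Fin n → ZMod 2) × (Fin n → ZMod 2))) := by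
      rw [hD2def, Submodule.map_coe]
      rfl
    rw [h4]
    have h5 : psiL ω n '' (D2 : Set ((Fin n → ZMod 2) × (Fin n → ZMod 2)))
        = (D2.map (psiL ω n) : Set (Fin n → F)) :=
      (Submodule.map_coe _ _).symm
    rw [h5]
    have h6 : D2.map (psiL ω n) = graphCode ω G := by
      rw [hspan, Submodule.map_span, graphCode, hrow]
      congr 1
      rw [← Set.range_comp]
      rfl
    rw [h6]
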